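/- Let K be a field, v and w two inequivalent discrete rank-one valuations on K with char of both residue fields ≠ 2, and x ∈ K* with x ∉ (1+M_v)K*² and x ∉ (1+M_w)K*². Suppose a ∈ K* satisfies v(a²) > v(x) and w(a²) < w(x). Then y := a² + x satisfies y ∉ K*² and y ∉ x·K*². -/

import Mathlib

private lemma val_div_lt_one {K : Type*} [Field K]
    (v : Valuation K (WithZero (Multiplicative ℤ))) {p q : K}
    (hq : q ≠ 0) (h : v p < v q) : v (p / q) < 1 := by
  have hq0 : v q ≠ 0 := by simpa using hq
  rw [map_div₀, div_lt_iff₀ (lt_of_le_of_ne (zero_le') (Ne.symm hq0)), one_mul]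
  exact h

/-- Setup of two inequivalent discrete rank-one valuations `v, w` with residue
characteristic `≠ 2`: if `x ∉ (1+M_v)K*²`, `x ∉ (1+M_w)K*²`, and `a` satisfies
`v(a²) > v(x)` and `w(a²) < w(x)` (additively), then `y = a² + x` is neither in
`K*²` nor in `x·K*²`. -/
theorem stmt_19 {K : Type*} [Field K]
    (v w : Valuation K (WithZero (Multiplicative ℤ)))
    (hvs : Function.Surjective v) (hws : Function.Surjective w)
    (hne : ¬ v.IsEquiv w)
    (hv2 : v (2 : K) = 1) (hw2 : w (2 : K) = 1)
    (x : K) (hx : x ≠ 0)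
    (hxv : ¬ ∃ u c : K, c ≠ 0 ∧ v (u - 1) < 1 ∧ x = u * c ^ 2)
    (hxw : ¬ ∃ u c : K, c ≠ 0 ∧ w (u - 1) < 1 ∧ x = u * c ^ 2)
    (a : K) (ha : a ≠ 0)
    (hav : v (a ^ 2) < v x) (haw : w x < w (a ^ 2)) :
    (¬ ∃ c : K, c ≠ 0 ∧ a ^ 2 + x = c ^ 2) ∧
    (¬ ∃ c : K, c ≠ 0 ∧ a ^ 2 + x = x * c ^ 2) := by
  have ha2 : (a : K) ^ 2 ≠ 0 := pow_ne_zero 2 ha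
  constructor
  · rintro ⟨c, hc, hy⟩
    apply hxv
    set s : K := a ^ 2 / x with hs_def
    have hs : v s < 1 := val_div_lt_one v hx hav
    have h1 : v (1 + s) = 1 := v.map_one_add_of_lt hs
    have hne1 : (1 : K) + s ≠ 0 := by
      intro h0
      rw [h0] at h1
      simp at h1
    refine ⟨(1 + s)⁻¹, c, hc, ?_, ?_⟩
    · have heq : (1 + s)⁻¹ - 1 = -s * (1 + s)⁻¹ := by
        field_simp
        ring
      rw [heq, map_mul, Valuation.map_neg, map_inv₀, h1]
      simpa using hs
    · have : x * (1 + s) = c ^ 2 := by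
        rw [← hy, hs_def]
        field_simp
        ring
      field_simp
      linear_combination this
  · rintro ⟨c, hc, hy⟩
    apply hxw
    set t : K := x / a ^ 2 with ht_def
    have ht : w t < 1 := val_div_lt_one w ha2 haw
    refine ⟨1 + t, a / c, div_ne_zero ha hc, by simpa using ht, ?_⟩
    have hxc : a ^ 2 + x = x * c ^ 2 := hy
    rw [ht_def]
    field_simp
    linear_combination -hxc
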